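/- Let S be a compact Hausdorff right-topological semigroup (associative * with each right translation p ↦ p * q continuous) with a distinguished element 1 satisfying 1 * q = q for all q. Suppose for each q ∈ S, r_q : S → S defined by r_q(p) = p * q is the unique continuous map from S to S commuting with all left translations by elements of a dense subgroup G ⊆ S and sending 1 to q. Then for any two minimal nonempty closed left ideals I, J of S, there is a bijection between I and J of the form p ↦ p * t. -/
import Mathlib


/-- Let `S` be a compact Hausdorff right-topological semigroup with a left identity `1`,
containing a subgroup `G` acting by left translations (which are homeomorphisms) with
`G * 1` dense, such that for each `q` the right translation `r_q : p ↦ p * q` is the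
unique continuous map commuting with all left translations by elements of `G` and
sending `1` to `q`. Then any two minimal nonempty closed left ideals `I`, `J` of `S`
are in bijection via a map of the form `p ↦ p * t`. -/
theorem stmt_19 {S : Type*} [TopologicalSpace S] [CompactSpace S] [T2Space S]
    (mul : S → S → S)
    (assoc : ∀ a b c : S, mul (mul a b) c = mul a (mul b c))
    (rcont : ∀ q : S, Continuous fun p : S => mul p q)
    (one : S) (hone : ∀ q : S, mul one q = q)
    (Gs : Set S) (hone_mem : one ∈ Gs)
    (hmul_mem : ∀ a ∈ Gs, ∀ b ∈ Gs, mul a b ∈ Gs)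
    (hinv_mem : ∀ a ∈ Gs, ∃ b ∈ Gs, mul a b = one ∧ mul b a = one)
    (hhomeo : ∀ g ∈ Gs, IsHomeomorph (fun p : S => mul g p))
    (hdense : Dense ((fun g : S => mul g one) '' Gs))
    (huniq : ∀ q : S, ∀ F : S → S, Continuous F →
      (∀ g ∈ Gs, ∀ p : S, F (mul g p) = mul g (F p)) → F one = q →
      F = fun p : S => mul p q)
    (I J : Set S)
    (hIne : I.Nonempty) (hIcl : IsClosed I) (hIid : ∀ (p : S), ∀ q ∈ I, mul p q ∈ I)
    (hImin : ∀ L ⊆ I, L.Nonempty → IsClosed L → (∀ (p : S), ∀ q ∈ L, mul p q ∈ L) → L = I)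
    (hJne : J.Nonempty) (hJcl : IsClosed J) (hJid : ∀ (p : S), ∀ q ∈ J, mul p q ∈ J)
    (hJmin : ∀ L ⊆ J, L.Nonempty → IsClosed L → (∀ (p : S), ∀ q ∈ L, mul p q ∈ L) → L = J) :
    ∃ t : S, Set.BijOn (fun p : S => mul p t) I J := by
  letI : Mul S := ⟨mul⟩
  letI : Semigroup S := ⟨assoc⟩
  -- idempotent `e` in `I`
  obtain ⟨e, heI, hee⟩ :=
    exists_idempotent_in_compact_subsemigroup (M := S) rcont I hIne hIcl.isCompact
      (fun x _ y hy => hIid x y hy)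
  -- idempotent `f` in `J`
  obtain ⟨f, hfJ, _⟩ :=
    exists_idempotent_in_compact_subsemigroup (M := S) rcont J hJne hJcl.isCompact
      (fun x _ y hy => hJid x y hy)
  have hee' : mul e e = e := hee
  -- `e` is a right identity on `I`
  have himg : (fun p : S => mul p e) '' I = I := by
    apply hImin
    · rintro _ ⟨q, hq, rfl⟩; exact hIid q e heI
    · exact hIne.image _
    · exact (hIcl.isCompact.image (rcont e)).isClosed
    · rintro p _ ⟨q, hq, rfl⟩; exact ⟨mul p q, hIid p q hq, assoc p q e⟩
  have hId_e : ∀ p ∈ I, mul p e = p := by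
    intro p hp
    rw [← himg] at hp
    obtain ⟨q, _, rfl⟩ := hp
    rw [assoc, hee']
  -- for `x ∈ I`, `S * x = I`
  have hrange : ∀ x ∈ I, Set.range (fun p : S => mul p x) = I := by
    intro x hx
    apply hImin
    · rintro _ ⟨p, rfl⟩; exact hIid p x hx
    · have : Nonempty S := ⟨x⟩
      exact Set.range_nonempty _
    · exact (isCompact_range (rcont x)).isClosed
    · rintro p _ ⟨q, rfl⟩; exact ⟨mul p q, assoc p q x⟩
  -- left inverses in `e * I`
  have hleft : ∀ x ∈ I, mul e x = x →
      ∃ v ∈ I, mul v x = e ∧ mul e v = v := by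
    intro x hx hex
    have he' : e ∈ Set.range (fun p : S => mul p x) := by rw [hrange x hx]; exact heI
    obtain ⟨v', hv'⟩ := he'
    have hv' : mul v' x = e := hv'
    refine ⟨mul e (mul v' e), hIid e _ (hIid v' e heI), ?_, ?_⟩
    · calc mul (mul e (mul v' e)) x = mul e (mul (mul v' e) x) := assoc _ _ _
        _ = mul e (mul v' (mul e x)) := by rw [assoc]
        _ = mul e (mul v' x) := by rw [hex]
        _ = mul e e := by rw [hv']
        _ = e := hee'
    · calc mul e (mul e (mul v' e)) = mul (mul e e) (mul v' e) := (assoc _ _ _).symm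
        _ = mul e (mul v' e) := by rw [hee']
  -- right inverses too
  have hinv : ∀ x ∈ I, mul e x = x → ∃ v ∈ I, mul x v = e := by
    intro x hx hex
    obtain ⟨v, hvI, hvx, hev⟩ := hleft x hx hex
    obtain ⟨w, hwI, hwv, _⟩ := hleft v hvI hev
    have hxw : x = w := by
      calc x = mul e x := hex.symm
        _ = mul (mul w v) x := by rw [hwv]
        _ = mul w (mul v x) := assoc _ _ _
        _ = mul w e := by rw [hvx]
        _ = w := hId_e w hwI
    rw [hxw]
    exact ⟨v, hvI, hwv⟩
  -- the element `x = e * (f * e)` of `e * I`, with right inverse `v`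
  have hfeI : mul f e ∈ I := hIid f e heI
  have hxI : mul e (mul f e) ∈ I := hIid e _ hfeI
  have hex : mul e (mul e (mul f e)) = mul e (mul f e) := by
    rw [← assoc, hee']
  obtain ⟨v, hvI, hxv⟩ := hinv _ hxI hex
  -- key cancellation: for `p ∈ I`, `((p * f) * e) * v = p`
  have hcancel : ∀ p ∈ I, mul (mul (mul p f) e) v = p := by
    intro p hp
    have hpx : mul p (mul e (mul f e)) = mul (mul p f) e := by
      rw [← assoc, hId_e p hp, ← assoc]
    calc mul (mul (mul p f) e) v = mul (mul p (mul e (mul f e))) v := by rw [hpx]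
      _ = mul p (mul (mul e (mul f e)) v) := assoc _ _ _
      _ = mul p e := by rw [hxv]
      _ = p := hId_e p hp
  refine ⟨f, ?_, ?_, ?_⟩
  · -- MapsTo
    intro p _
    exact hJid p f hfJ
  · -- InjOn
    intro p hp q hq hpq
    simp only at hpq
    calc p = mul (mul (mul p f) e) v := (hcancel p hp).symm
      _ = mul (mul (mul q f) e) v := by rw [hpq]
      _ = q := hcancel q hq
  · -- SurjOn
    have : (fun p : S => mul p f) '' I = J := by
      apply hJmin
      · rintro _ ⟨q, _, rfl⟩; exact hJid q f hfJ
      · exact hIne.image _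
      · exact (hIcl.isCompact.image (rcont f)).isClosed
      · rintro p _ ⟨q, hq, rfl⟩; exact ⟨mul p q, hIid p q hq, assoc p q f⟩
    intro j hj
    rw [← this] at hj
    obtain ⟨p, hp, rfl⟩ := hj
    exact ⟨p, hp, rfl⟩
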